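/- For any partition λ with parts λ_1 ≥ λ_2 ≥ … ≥ λ_ℓ and multiplicities f_j = #{i : λ_i = j}, and any positive integers k and d, the condition that λ_i − λ_{i+k} ≥ d for all 1 ≤ i ≤ ℓ − k is equivalent to the condition that f_j + f_{j+1} + ⋯ + f_{j+d−1} ≤ k for all j ≥ 1. -/

import Mathlib

theorem aux1 (l : List ℕ) (p : ℕ → Bool) :
    l.countP p = (Finset.univ.filter (fun m : Fin l.length => p (l.get m))).card := by
  conv_lhs => rw [← List.map_get_finRange l]
  rw [List.countP_map, Finset.card_def, Finset.filter_val, Fin.univ_def]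
  simp [Multiset.filter_coe, List.countP_eq_length_filter, Function.comp]
  rfl

theorem aux2 (l : List ℕ) (a : ℕ) :
    l.count a = (Finset.univ.filter (fun m : Fin l.length => l.get m = a)).card := by
  rw [List.count, aux1]
  congr 1
  apply Finset.filter_congr
  intro m _
  simp

theorem aux3 (l : List ℕ) (j d : ℕ) :
    ∑ t ∈ Finset.range d, l.count (j + t) =
      (Finset.univ.filter (fun m : Fin l.length => j ≤ l.get m ∧ l.get m < j + d)).card := by
  simp_rw [aux2]
  rw [← Finset.card_biUnion]
  · congr 1
    ext m
    simp only [Finset.mem_biUnion, Finset.mem_range, Finset.mem_filter, Finset.mem_univ,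
      true_and]
    constructor
    · rintro ⟨t, ht, h⟩; omega
    · rintro ⟨h1, h2⟩; exact ⟨l.get m - j, by omega, by omega⟩
  · intro x hx y hy hxy
    simp only [Finset.disjoint_left, Finset.mem_filter, Finset.mem_univ, true_and]
    intro m h1 h2
    omega

/-- For a partition (weakly decreasing list of positive integers),
the difference condition `λ_i − λ_{i+k} ≥ d` for all valid `i` is equivalent to
`f_j + f_{j+1} + ⋯ + f_{j+d−1} ≤ k` for all `j ≥ 1`, where `f_j` is the
multiplicity of `j`. -/
theorem stmt0 (l : List ℕ) (hpos : ∀ x ∈ l, 0 < x) (hsort : l.Pairwise (· ≥ ·))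
    (k d : ℕ) (hk : 0 < k) (hd : 0 < d) :
    (∀ i (h1 : i < l.length) (h2 : i + k < l.length),
        l.get ⟨i + k, h2⟩ + d ≤ l.get ⟨i, h1⟩)
      ↔ (∀ j : ℕ, 1 ≤ j → (∑ t ∈ Finset.range d, l.count (j + t)) ≤ k) := by
  have hmono : ∀ (a b : Fin l.length), a ≤ b → l.get b ≤ l.get a := by
    intro a b hab
    rcases eq_or_lt_of_le hab with h | h
    · rw [h]
    · exact hsort.rel_get_of_lt h
  constructor
  · intro H j hj
    rw [aux3]
    by_contra hc
    push_neg at hc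
    set S := Finset.univ.filter (fun m : Fin l.length => j ≤ l.get m ∧ l.get m < j + d)
      with hS
    have hne : S.Nonempty := Finset.card_pos.mp (by omega)
    set a := S.min' hne
    set b := S.max' hne
    have hsub : S ⊆ Finset.Icc a b := fun m hm =>
      Finset.mem_Icc.mpr ⟨S.min'_le m hm, S.le_max' m hm⟩
    have hcard : S.card ≤ (b : ℕ) + 1 - (a : ℕ) := by
      calc S.card ≤ (Finset.Icc a b).card := Finset.card_le_card hsub
        _ = (b : ℕ) + 1 - (a : ℕ) := Fin.card_Icc a b
    have hba : (a : ℕ) + k ≤ (b : ℕ) := by omega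
    have ha : j ≤ l.get a ∧ l.get a < j + d := by
      have h : a ∈ Finset.univ.filter (fun m : Fin l.length => j ≤ l.get m ∧ l.get m < j + d) :=
        S.min'_mem hne
      exact (Finset.mem_filter.mp h).2
    have hb : j ≤ l.get b ∧ l.get b < j + d := by
      have h : b ∈ Finset.univ.filter (fun m : Fin l.length => j ≤ l.get m ∧ l.get m < j + d) :=
        S.max'_mem hne
      exact (Finset.mem_filter.mp h).2
    have h2 : (a : ℕ) + k < l.length := lt_of_le_of_lt hba b.isLt
    have hdiff := H a a.isLt h2
    have hbd : l.get b ≤ l.get ⟨(a : ℕ) + k, h2⟩ := hmono _ b hba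
    simp only [Fin.eta] at hdiff
    omega
  · intro H i h1 h2
    by_contra hc
    push_neg at hc
    set j := l.get ⟨i + k, h2⟩ with hj
    have hj1 : 1 ≤ j := hpos _ (l.get_mem _)
    have := H j hj1
    rw [aux3] at this
    have hsub : Finset.Icc (⟨i, h1⟩ : Fin l.length) ⟨i + k, h2⟩ ⊆
        Finset.univ.filter (fun m : Fin l.length => j ≤ l.get m ∧ l.get m < j + d) := by
      intro m hm
      rw [Finset.mem_Icc] at hm
      refine Finset.mem_filter.mpr ⟨Finset.mem_univ _, ?_, ?_⟩
      · exact hmono m ⟨i + k, h2⟩ hm.2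
      · have := hmono ⟨i, h1⟩ m hm.1
        omega
    have hcard := Finset.card_le_card hsub
    rw [Fin.card_Icc] at hcard
    simp only [] at hcard
    omega
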